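/- Let (s,t) be an edge with s<t. If an execution contains two transitions C_0 ↦ C_1 and D_0 ↦ D_1 with C_1 ↦* D_0, in each of which node t executes the rule Marriage(s), then node s executes the rule Seduction(t) in some transition occurring between configurations C_1 and D_0. -/

import Mathlib

/-!
Formal model of the self-stabilizing maximal-matching algorithm in the
link-register model under read/write atomicity.

Nodes form a finite simple graph `G` on a vertex type `V` whose linear order
plays the role of the distinct identifiers.  A configuration records, for each
node `u`, its pointer `p u : Option V` (`none` = null), its lock variable
`m u : Fin 3`, and for each (directed) link a register `r u v : RegFlag × Fin 3`.
-/

inductive RegFlag where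
  | Idle | You | Other
deriving DecidableEq

abbrev RegVal : Type := RegFlag × Fin 3

inductive Rule (V : Type) where
  | write (a : V)
  | seduction (a : V)
  | marriage (a : V)
  | increase
  | reset
deriving DecidableEq

structure Config (V : Type) where
  p : V → Option V
  m : V → Fin 3
  r : V → V → RegVal

variable {V : Type}

def correctRegisterValue [DecidableEq V] (C : Config V) (u a : V) : RegVal :=
  match C.p u with
  | none => (RegFlag.Idle, 0)
  | some b => if b = a then (RegFlag.You, C.m u) else (RegFlag.Other, C.m u)

def PRabandonment [LinearOrder V] (C : Config V) (u : V) : Prop :=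
  ∃ v, C.p u = some v ∧
    (((C.r v u).1 ≠ RegFlag.You ∧ (v < u ∨ C.m u ≠ 0)) ∨
     (C.r v u = (RegFlag.Other, 2) ∧ u < v))

def PRreset [LinearOrder V] (C : Config V) (u : V) : Prop :=
  ∃ v, C.p u = some v ∧ (C.r v u).1 = RegFlag.You ∧
    ((C.m u = 0 ∧ (C.r v u).2 = 2) ∨
     (C.m u = 2 ∧ (C.r v u).2 = 0) ∨
     (C.m u = 0 ∧ (C.r v u).2 = 1 ∧ v < u) ∨
     (C.m u = 1 ∧ (C.r v u).2 = 0 ∧ u < v) ∨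
     (C.m u = 1 ∧ (C.r v u).2 = 2 ∧ u < v) ∨
     (C.m u = 2 ∧ (C.r v u).2 = 1 ∧ v < u))

/-- The guard of each rule of node `u` in configuration `C`. -/
def eligible [LinearOrder V] (G : SimpleGraph V) (C : Config V) (u : V) : Rule V → Prop
  | .write a => G.Adj u a ∧ C.r u a ≠ correctRegisterValue C u a
  | .seduction a => G.Adj u a ∧ C.p u = none ∧ C.r u a = correctRegisterValue C u a ∧
      C.r a u = (RegFlag.Idle, 0) ∧ u < a
  | .marriage a => G.Adj u a ∧ C.p u = none ∧ C.r u a = correctRegisterValue C u a ∧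
      C.r a u = (RegFlag.You, 0) ∧ a < u
  | .increase => ∃ v, C.p u = some v ∧ C.r u v = correctRegisterValue C u v ∧
      (C.r v u).1 = RegFlag.You ∧
      ((C.m u = 0 ∧ ((u < v ∧ (C.r v u).2 = 1) ∨ (v < u ∧ (C.r v u).2 = 0))) ∨
       (C.m u = 1 ∧ ((u < v ∧ (C.r v u).2 = 1) ∨ (v < u ∧ (C.r v u).2 = 2))))
  | .reset => ∃ v, C.p u = some v ∧ C.r u v = correctRegisterValue C u v ∧
      (PRabandonment C u ∨ PRreset C u)

/-- Simultaneous application of (at most) one rule per node.  `A u = some R`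
means node `u` executes rule `R`; each action only modifies the data owned by
the acting node. -/
def step [DecidableEq V] (C : Config V) (A : V → Option (Rule V)) : Config V where
  p u :=
    match A u with
    | some (Rule.seduction a) => some a
    | some (Rule.marriage a) => some a
    | some Rule.reset => none
    | _ => C.p u
  m u :=
    match A u with
    | some (Rule.seduction _) => 0
    | some (Rule.marriage _) => 0
    | some Rule.reset => 0
    | some Rule.increase => C.m u + 1
    | _ => C.m u
  r u a :=
    match A u with
    | some (Rule.write b) => if a = b then correctRegisterValue C u a else C.r u a
    | _ => C.r u a

/-- An execution `C_0, A_0, C_1, A_1, …, C_T`: at each transition `i < T`, a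
nonempty set of eligible rules (at most one per node) is executed
simultaneously. -/
structure Execution [LinearOrder V] (G : SimpleGraph V) where
  T : ℕ
  conf : ℕ → Config V
  act : ℕ → V → Option (Rule V)
  act_nonempty : ∀ i < T, ∃ u, (act i u).isSome
  act_eligible : ∀ i < T, ∀ u R, act i u = some R → eligible G (conf i) u R
  conf_succ : ∀ i < T, conf (i + 1) = step (conf i) (act i)

/-- A configuration is stable if no rule is eligible at any node. -/
def stableConfig [LinearOrder V] (G : SimpleGraph V) (C : Config V) : Prop :=
  ∀ u R, ¬ eligible G C u R

/-- The edge `(s,t)` (with `s < t` intended) is in state `(You, α, β)`. -/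
def edgeState (C : Config V) (s t : V) (α β : Fin 3) : Prop :=
  C.p s = some t ∧ C.p t = some s ∧ C.m s = α ∧ C.m t = β

def updatedCorrectState (C : Config V) (s t : V) (α β : Fin 3) : Prop :=
  edgeState C s t α β ∧ C.r s t = (RegFlag.You, α) ∧ C.r t s = (RegFlag.You, β) ∧
    ((α, β) = ((0 : Fin 3), (0 : Fin 3)) ∨ (α, β) = (0, 1) ∨ (α, β) = (1, 1) ∨
     (α, β) = (2, 1) ∨ (α, β) = (2, 2))

def toUpdateCorrectState (C : Config V) (s t : V) (α β : Fin 3) : Prop :=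
  edgeState C s t α β ∧
    ((((α, β) = ((0 : Fin 3), (1 : Fin 3)) ∨ (α, β) = (2, 2)) ∧
        C.r s t = (RegFlag.You, α) ∧ C.r t s = (RegFlag.You, β - 1)) ∨
     (((α, β) = ((1 : Fin 3), (1 : Fin 3)) ∨ (α, β) = (2, 1)) ∧
        C.r s t = (RegFlag.You, α - 1) ∧ C.r t s = (RegFlag.You, β)))

def correctState (C : Config V) (s t : V) (α β : Fin 3) : Prop :=
  updatedCorrectState C s t α β ∨ toUpdateCorrectState C s t α β

/-- Node `u` executes a `v`-rule in transition `k`: one of `Write(v)`,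
`Seduction(v)`, `Marriage(v)`, a `v`-`Increase` or a `v`-`Reset`. -/
def execVRule [LinearOrder V] {G : SimpleGraph V} (E : Execution G) (k : ℕ) (u v : V) : Prop :=
  k < E.T ∧
    (E.act k u = some (Rule.write v) ∨ E.act k u = some (Rule.seduction v) ∨
     E.act k u = some (Rule.marriage v) ∨
     ((E.act k u = some Rule.increase ∨ E.act k u = some Rule.reset) ∧
       (E.conf k).p u = some v))

/-- If `P` holds at `a` and fails at `b ≥ a`, there is a first flip:
`P` holds on `[a,k]` and fails at `k+1`. -/
lemma aux_first_flip {P : ℕ → Prop} {a b : ℕ} (hab : a ≤ b) (ha : P a) (hb : ¬ P b) :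
    ∃ k, a ≤ k ∧ k < b ∧ (∀ n, a ≤ n → n ≤ k → P n) ∧ ¬ P (k + 1) := by
  classical
  have hlt : a < b := lt_of_le_of_ne hab (by rintro rfl; exact hb ha)
  have hex : ∃ k, a ≤ k ∧ ¬ P (k + 1) :=
    ⟨b - 1, by omega, by
      have : b - 1 + 1 = b := by omega
      rw [this]; exact hb⟩
  have hspec := Nat.find_spec hex
  have hle : Nat.find hex ≤ b - 1 :=
    Nat.find_le ⟨by omega, by
      have : b - 1 + 1 = b := by omega
      rw [this]; exact hb⟩
  refine ⟨Nat.find hex, hspec.1, by omega, ?_, hspec.2⟩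
  intro n hn
  induction n, hn using Nat.le_induction with
  | base => intro _; exact ha
  | succ n hn ih =>
    intro hnk
    by_contra hP
    have : Nat.find hex ≤ n := Nat.find_le ⟨hn, hP⟩
    omega

section AuxExec

variable {V : Type} [LinearOrder V] {G : SimpleGraph V} (E : Execution G)

/-- Only a `Write a` action of `u` can change the register `r u a`, and it
writes the correct register value of the previous configuration. -/
lemma aux_r_change {n : ℕ} (hn : n < E.T) {u a : V}
    (h : (E.conf (n + 1)).r u a ≠ (E.conf n).r u a) :
    E.act n u = some (Rule.write a) ∧
      (E.conf (n + 1)).r u a = correctRegisterValue (E.conf n) u a := by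
  have hc := E.conf_succ n hn
  rcases hA : E.act n u with _ | R
  · rw [hc] at h; simp [step, hA] at h
  cases R with
  | write b =>
    by_cases hb : a = b
    · subst hb; rw [hc]; simp [step, hA]
    · rw [hc] at h; simp [step, hA, hb] at h
  | seduction b => rw [hc] at h; simp [step, hA] at h
  | marriage b => rw [hc] at h; simp [step, hA] at h
  | increase => rw [hc] at h; simp [step, hA] at h
  | reset => rw [hc] at h; simp [step, hA] at h

/-- If the pair `(p u, m u)` becomes `(some t, 0)` at a transition where it did
not hold before, then `u` executed `Seduction t` or `Marriage t`. -/
lemma aux_pm_new_pair {n : ℕ} (hn : n < E.T) {u t : V}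
    (h1 : ¬ ((E.conf n).p u = some t ∧ (E.conf n).m u = 0))
    (h2 : (E.conf (n + 1)).p u = some t ∧ (E.conf (n + 1)).m u = 0) :
    E.act n u = some (Rule.seduction t) ∨ E.act n u = some (Rule.marriage t) := by
  have hc := E.conf_succ n hn
  rcases hA : E.act n u with _ | R
  · rw [hc] at h2; simp [step, hA] at h2; exact absurd h2 h1
  cases R with
  | write b => rw [hc] at h2; simp [step, hA] at h2; exact absurd h2 h1
  | seduction b =>
    rw [hc] at h2; simp [step, hA] at h2
    left; rw [h2]
  | marriage b =>
    rw [hc] at h2; simp [step, hA] at h2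
    right; rw [h2]
  | increase =>
    exfalso
    have helig := E.act_eligible n hn u _ hA
    obtain ⟨v, hpv, -, -, hbr⟩ := helig
    rw [hc] at h2; simp [step, hA] at h2
    have hm1 : (E.conf n).m u + 1 = 0 := h2.2
    rcases hbr with ⟨h0, -⟩ | ⟨h0, -⟩ <;> rw [h0] at hm1 <;> exact absurd hm1 (by decide)
  | reset =>
    exfalso
    rw [hc] at h2; simp [step, hA] at h2

end AuxExec

/-- Between two `Marriage(s)` moves of `t` (an edge `(s,t)`
with `s < t`), node `s` executes a `Seduction(t)` move. -/
theorem stmt_8 {V : Type} [Fintype V] [LinearOrder V] (G : SimpleGraph V)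
    (s t : V) (hadj : G.Adj s t) (hst : s < t) (E : Execution G)
    (i j : ℕ) (hij : i + 1 ≤ j) (hjT : j < E.T)
    (hi : E.act i t = some (Rule.marriage s))
    (hj : E.act j t = some (Rule.marriage s)) :
    ∃ k, i + 1 ≤ k ∧ k + 1 ≤ j ∧ E.act k s = some (Rule.seduction t) := by
  classical
  have hiT : i < E.T := by omega
  obtain ⟨-, hpti, -, hrsti, -⟩ := E.act_eligible i hiT t _ hi
  obtain ⟨-, hptj, -, hrstj, -⟩ := E.act_eligible j hjT t _ hj
  have hpt1 : (E.conf (i + 1)).p t = some s := by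
    rw [E.conf_succ i hiT]; simp [step, hi]
  have hmt1 : (E.conf (i + 1)).m t = 0 := by
    rw [E.conf_succ i hiT]; simp [step, hi]
  have hij2 : i + 2 ≤ j := by
    by_contra h
    have hji : j = i + 1 := by omega
    rw [hji, hpt1] at hptj; exact nomatch hptj
  -- Part A: find n0 ∈ [i+1, j) with r s t ≠ (You, 0)
  have hPartA : ∃ n0, i + 1 ≤ n0 ∧ n0 < j ∧
      (E.conf n0).r s t ≠ (RegFlag.You, (0 : Fin 3)) := by
    obtain ⟨k, hk1, hk2, hkall, hkflip⟩ :=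
      aux_first_flip (P := fun n => (E.conf n).p t = some s) (a := i + 1) (b := j)
        (by omega) hpt1
        (by show ¬ (E.conf j).p t = some s
            rw [hptj]; exact fun h => nomatch h)
    have hkT : k < E.T := by omega
    have hpk : (E.conf k).p t = some s := hkall k hk1 le_rfl
    have hreset : E.act k t = some Rule.reset := by
      rcases hAk : E.act k t with _ | R
      · exfalso; apply hkflip; rw [E.conf_succ k hkT]; simpa [step, hAk] using hpk
      cases R with
      | write b =>
        exfalso; apply hkflip; rw [E.conf_succ k hkT]; simpa [step, hAk] using hpk
      | seduction b =>
        exfalso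
        obtain ⟨-, hnone, -⟩ := E.act_eligible k hkT t _ hAk
        rw [hnone] at hpk; exact nomatch hpk
      | marriage b =>
        exfalso
        obtain ⟨-, hnone, -⟩ := E.act_eligible k hkT t _ hAk
        rw [hnone] at hpk; exact nomatch hpk
      | increase =>
        exfalso; apply hkflip; rw [E.conf_succ k hkT]; simpa [step, hAk] using hpk
      | reset => rfl
    obtain ⟨v, hpv, -, hPR⟩ := E.act_eligible k hkT t _ hreset
    rcases hPR with hab | hres
    · -- PRabandonment
      obtain ⟨w, hpw, hcase⟩ := hab
      have hws : w = s := by rw [hpk] at hpw; exact (Option.some.inj hpw).symm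
      rw [hws] at hcase
      rcases hcase with ⟨hne, -⟩ | ⟨-, hts⟩
      · exact ⟨k, hk1, hk2, fun h => hne (by rw [h])⟩
      · exact absurd hts hst.asymm
    · -- PRreset
      obtain ⟨w, hpw, hYou, hdisj⟩ := hres
      have hws : w = s := by rw [hpk] at hpw; exact (Option.some.inj hpw).symm
      rw [hws] at hdisj
      rcases hdisj with ⟨-, h2⟩ | ⟨hm2, h0⟩ | ⟨-, h2, -⟩ | ⟨-, -, hts⟩ | ⟨-, -, hts⟩ | ⟨-, h2, -⟩
      · exact ⟨k, hk1, hk2, fun h => by rw [h] at h2; exact absurd h2 (by decide)⟩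
      · -- m t k = 2 : find the increase from 1 to 2
        obtain ⟨k', hk'1, hk'2, hk'all, hk'flip⟩ :=
          aux_first_flip (P := fun n => ¬ (E.conf n).m t = 2) (a := i + 1) (b := k)
            hk1 (by show ¬ (E.conf (i + 1)).m t = 2; rw [hmt1]; decide) (not_not.mpr hm2)
        have hm2' : (E.conf (k' + 1)).m t = 2 := not_not.mp hk'flip
        have hmne : ¬ (E.conf k').m t = 2 := hk'all k' hk'1 le_rfl
        have hk'T : k' < E.T := by omega
        have hpk' : (E.conf k').p t = some s := hkall k' hk'1 (by omega)
        have hinc : E.act k' t = some Rule.increase := by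
          rcases hAk' : E.act k' t with _ | R
          · exfalso; apply hmne
            rw [E.conf_succ k' hk'T] at hm2'; simpa [step, hAk'] using hm2'
          cases R with
          | write b =>
            exfalso; apply hmne
            rw [E.conf_succ k' hk'T] at hm2'; simpa [step, hAk'] using hm2'
          | seduction b =>
            exfalso; rw [E.conf_succ k' hk'T] at hm2'; simp [step, hAk'] at hm2'
          | marriage b =>
            exfalso; rw [E.conf_succ k' hk'T] at hm2'; simp [step, hAk'] at hm2'
          | reset =>
            exfalso; rw [E.conf_succ k' hk'T] at hm2'; simp [step, hAk'] at hm2'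
          | increase => rfl
        obtain ⟨v', hpv', -, -, hbr⟩ := E.act_eligible k' hk'T t _ hinc
        have hv's : v' = s := by rw [hpk'] at hpv'; exact (Option.some.inj hpv').symm
        rw [hv's] at hbr
        have hsucc : (E.conf k').m t + 1 = 2 := by
          rw [E.conf_succ k' hk'T] at hm2'; simpa [step, hinc] using hm2'
        rcases hbr with ⟨hmm, -⟩ | ⟨hmm, hin⟩
        · exfalso; rw [hmm] at hsucc; exact absurd hsucc (by decide)
        · rcases hin with ⟨hts, -⟩ | ⟨-, hr2⟩
          · exact absurd hts hst.asymm
          · exact ⟨k', hk'1, by omega,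
              fun h => by rw [h] at hr2; exact absurd hr2 (by decide)⟩
      · exact ⟨k, hk1, hk2, fun h => by rw [h] at h2; exact absurd h2 (by decide)⟩
      · exact absurd hts hst.asymm
      · exact absurd hts hst.asymm
      · exact ⟨k, hk1, hk2, fun h => by rw [h] at h2; exact absurd h2 (by decide)⟩
  obtain ⟨n0, hn01, hn02, hn0r⟩ := hPartA
  -- Part B: the register returns to (You,0) at some l via a Write(t) of s
  obtain ⟨l, hl1, hl2, hlall, hlflip⟩ :=
    aux_first_flip (P := fun n => ¬ (E.conf n).r s t = (RegFlag.You, (0 : Fin 3)))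
      (a := n0) (b := j) (le_of_lt hn02) hn0r (not_not.mpr hrstj)
  have hlr : (E.conf (l + 1)).r s t = (RegFlag.You, (0 : Fin 3)) := not_not.mp hlflip
  have hlne : ¬ (E.conf l).r s t = (RegFlag.You, (0 : Fin 3)) := hlall l hl1 le_rfl
  have hlT : l < E.T := by omega
  obtain ⟨hwl, hcorr⟩ := aux_r_change E hlT (u := s) (a := t)
    (by rw [hlr]; exact fun h => hlne h.symm)
  rw [hlr] at hcorr
  have hPstl : (E.conf l).p s = some t ∧ (E.conf l).m s = 0 := by
    rcases hps : (E.conf l).p s with _ | b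
    · exfalso
      simp only [correctRegisterValue, hps] at hcorr
      have h5 := congrArg Prod.fst hcorr
      simp at h5
    · simp only [correctRegisterValue, hps] at hcorr
      by_cases hb : b = t
      · rw [if_pos hb] at hcorr
        exact ⟨congrArg some hb, (congrArg Prod.snd hcorr).symm⟩
      · exfalso
        rw [if_neg hb] at hcorr
        have h5 := congrArg Prod.fst hcorr
        simp at h5
  have hexm : ∃ m', i ≤ m' ∧ m' ≤ l ∧
      ¬ ((E.conf m').p s = some t ∧ (E.conf m').m s = 0) := by
    by_contra hno
    push_neg at hno
    have hconst : ∀ n, i ≤ n → n ≤ l →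
        (E.conf n).r s t = (RegFlag.You, (0 : Fin 3)) := by
      intro n hn
      induction n, hn using Nat.le_induction with
      | base => exact fun _ => hrsti
      | succ n hn ih =>
        intro hnl
        have hr := ih (by omega)
        have hnT : n < E.T := by omega
        by_cases hch : (E.conf (n + 1)).r s t = (E.conf n).r s t
        · rw [hch, hr]
        · obtain ⟨-, hc⟩ := aux_r_change E hnT hch
          obtain ⟨hp0, hm0⟩ := hno n hn (by omega)
          rw [hc]
          simp [correctRegisterValue, hp0, hm0]
    exact hlne (hconst l (by omega) le_rfl)
  obtain ⟨m', hm'1, hm'2, hm'ne⟩ := hexm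
  obtain ⟨q, hq1, hq2, hqall, hqflip⟩ :=
    aux_first_flip (P := fun n => ¬ ((E.conf n).p s = some t ∧ (E.conf n).m s = 0))
      hm'2 hm'ne (not_not.mpr hPstl)
  have hqT : q < E.T := by omega
  have hqne := hqall q hq1 le_rfl
  have hqnew := not_not.mp hqflip
  rcases aux_pm_new_pair E hqT hqne hqnew with hsed | hmar
  · have hqi : q ≠ i := by
      intro h
      subst h
      obtain ⟨-, hpnone, hrc, -, -⟩ := E.act_eligible q hqT s _ hsed
      rw [hrsti] at hrc
      simp [correctRegisterValue, hpnone] at hrc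
    exact ⟨q, by omega, by omega, hsed⟩
  · obtain ⟨-, -, -, -, hts⟩ := E.act_eligible q hqT s _ hmar
    exact absurd hts hst.asymm
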